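/- arXiv:1704.08661 — 3 statements merged into one kernel-verified Lean document; each statement's English description precedes it below -/
import Mathlib

section
/- Let T_n be a string of length n over a finite alphabet and let l > 0 be the largest index less than n with t_l = t_n. Then the number of distinct new subsequences of T_n equals Σ_{i=l}^{n-1} ν(T_i), where ν(T_i) is the number of distinct subsequences of the prefix T_i that are not subsequences of T_{i-1}. -/
/-- Number of distinct nonempty subsequences of a string. -/
def phi {A : Type*} [DecidableEq A] (T : List A) : ℕ :=
  (T.sublists.toFinset.erase []).card

/-- Number of new distinct subsequences contributed by the last letter. -/
def nu {A : Type*} [DecidableEq A] (T : List A) : ℕ :=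
  phi T - phi T.dropLast

section Aux

open List
variable {A : Type*} [DecidableEq A]

private def SF (T : List A) : Finset (List A) := T.sublists.toFinset

private lemma mem_SF {s T : List A} : s ∈ SF T ↔ s <+ T := by
  simp [SF, List.mem_sublists]

private lemma SF_mono {S T : List A} (h : S <+ T) : SF S ⊆ SF T := by
  intro s hs; rw [mem_SF] at *; exact hs.trans h

private lemma nil_mem_SF (T : List A) : ([] : List A) ∈ SF T := mem_SF.2 (List.nil_sublist T)

private lemma card_SF_pos (T : List A) : 0 < (SF T).card := Finset.card_pos.2 ⟨[], nil_mem_SF T⟩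

private lemma phi_eq (T : List A) : phi T = (SF T).card - 1 := by
  rw [phi]
  have : T.sublists.toFinset = SF T := rfl
  rw [this, Finset.card_erase_of_mem (nil_mem_SF T)]

private lemma nu_eq (T : List A) : nu T = (SF T).card - (SF T.dropLast).card := by
  rw [nu, phi_eq, phi_eq]
  have h1 := card_SF_pos T.dropLast
  have h2 : (SF T.dropLast).card ≤ (SF T).card :=
    Finset.card_le_card (SF_mono (List.dropLast_sublist T))
  omega

private lemma tele (f : ℕ → ℕ) (hf : Monotone f) (l : ℕ) (hl : 0 < l) :
    ∀ m, l ≤ m → ∑ i ∈ Finset.Icc l m, (f i - f (i - 1)) = f m - f (l - 1) := by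
  intro m
  induction m with
  | zero => intro h; omega
  | succ m ih =>
    intro h
    rcases eq_or_lt_of_le h with rfl | hlt
    · simp
    · have hlm : l ≤ m := by omega
      rw [Finset.sum_Icc_succ_top h, ih hlm]
      have h1 : f (l - 1) ≤ f m := hf (by omega)
      have h2 : f m ≤ f (m + 1) := hf (by omega)
      simp only [Nat.add_sub_cancel]
      omega

private lemma key1 {U V : List A} {a : A} (hV : a ∉ V) {s : List A} :
    s ++ [a] <+ U ++ V ↔ s ++ [a] <+ U := by
  constructor
  · intro h
    rw [List.sublist_append_iff] at h
    obtain ⟨u, v, huv, hu, hv⟩ := h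
    rcases eq_or_ne v [] with rfl | hne
    · simpa [huv] using hu
    · exfalso
      apply hV
      apply hv.subset
      have h1 : (u ++ v).getLast (by simp [hne]) = v.getLast hne :=
        List.getLast_append_of_ne_nil _ hne
      have h2 : (s ++ [a]).getLast (by simp) = a := List.getLast_concat
      have h3 : v.getLast hne = a := by
        rw [← h1, ← h2]
        congr 1
        exact huv.symm
      rw [← h3]
      exact List.getLast_mem hne
  · intro h; exact h.trans (List.sublist_append_left U V)

private lemma key2 {U : List A} {a : A} {s : List A} :
    s ++ [a] <+ U ++ [a] ↔ s <+ U := by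
  constructor
  · intro h
    rw [List.sublist_append_iff] at h
    obtain ⟨u, v, huv, hu, hv⟩ := h
    rcases List.sublist_singleton.mp hv with rfl | rfl
    · rw [List.append_nil] at huv
      rw [← huv] at hu
      exact (List.sublist_append_left s [a]).trans hu
    · have : s = u := by
        have := congrArg List.dropLast huv
        simpa using this
      rw [this]; exact hu
  · intro h; exact h.append_right _

private lemma countAux (P Q : List A) (a : A) (hPQ : ∀ s : List A, s ++ [a] <+ P ↔ s <+ Q) :
    (SF (P ++ [a])).card - (SF P).card = (SF P).card - (SF Q).card := by
  have hQP : SF Q ⊆ SF P := by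
    intro s hs
    rw [mem_SF] at *
    exact (List.sublist_append_left s [a]).trans ((hPQ s).mpr hs)
  have hset : SF (P ++ [a]) \ SF P = Finset.image (· ++ [a]) (SF P \ SF Q) := by
    ext s
    simp only [Finset.mem_sdiff, Finset.mem_image, mem_SF]
    constructor
    · rintro ⟨hs, hns⟩
      rw [List.sublist_append_iff] at hs
      obtain ⟨u, v, huv, hu, hv⟩ := hs
      rcases List.sublist_singleton.mp hv with rfl | rfl
      · rw [List.append_nil] at huv; subst huv; exact absurd hu hns
      · refine ⟨u, ⟨hu, ?_⟩, huv.symm⟩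
        intro hQ
        exact hns (by rw [huv]; exact (hPQ u).mpr hQ)
    · rintro ⟨u, ⟨hu, hnQ⟩, rfl⟩
      exact ⟨hu.append_right _, fun h => hnQ ((hPQ u).mp h)⟩
  have hPP : SF P ⊆ SF (P ++ [a]) := SF_mono (List.sublist_append_left P [a])
  rw [← Finset.card_sdiff_of_subset hPP, hset,
    Finset.card_image_of_injective _ (fun x y h => by simpa using h),
    Finset.card_sdiff_of_subset hQP]

end Aux

open List in
theorem stmt_2 {A : Type*} [DecidableEq A] [Fintype A] [Inhabited A]
    (T : List A) (n l : ℕ) (hn : T.length = n)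
    (hl : 0 < l) (hln : l < n)
    (heq : T.getD (l - 1) default = T.getD (n - 1) default)
    (hmax : ∀ i, l < i → i < n → T.getD (i - 1) default ≠ T.getD (n - 1) default) :
    nu T = ∑ i ∈ Finset.Icc l (n - 1), nu (T.take i) := by
  subst hn
  set n := T.length with hn
  have hn0 : 0 < n := by omega
  set a : A := T.getD (n - 1) default with ha
  have ha' : a = T[n - 1]'(by omega) := by
    rw [ha]; exact List.getD_eq_getElem T default (by omega)
  have hal : a = T[l - 1]'(by omega) := by
    rw [← heq]; exact List.getD_eq_getElem T default (by omega)
  -- T = P ++ [a]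
  have hT : T = T.take (n - 1) ++ [a] := by
    have h := List.take_concat_get' T (n - 1) (by omega)
    have h2 : n - 1 + 1 = n := by omega
    rw [h2] at h
    rw [ha', h, hn, List.take_length]
  -- T.take l = Q ++ [a]
  have hQd : T.take l = T.take (l - 1) ++ [a] := by
    have h := List.take_concat_get' T (l - 1) (by omega)
    have h2 : l - 1 + 1 = l := by omega
    rw [h2] at h
    rw [hal]
    exact h.symm
  -- P = take l ++ V with a ∉ V
  set V : List A := (T.take (n - 1)).drop l with hV
  have hPd : T.take (n - 1) = T.take l ++ V := by
    rw [hV]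
    conv_lhs => rw [← List.take_append_drop l (T.take (n - 1))]
    rw [List.take_take, min_eq_left (by omega)]
  have haV : a ∉ V := by
    intro hmem
    rw [List.mem_iff_getElem] at hmem
    obtain ⟨j, hj, hja⟩ := hmem
    have hjlen : j < n - 1 - l := by
      have hj' := hj; simp [hV, List.length_drop, List.length_take] at hj'; omega
    have hVj : V[j]'hj = T[l + j]'(by omega) := by
      simp only [hV, List.getElem_drop, List.getElem_take]
    apply hmax (l + j + 1) (by omega) (by omega)
    rw [List.getD_eq_getElem T default (by omega : l + j + 1 - 1 < T.length)]
    show T[l + j + 1 - 1] = a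
    simp only [Nat.add_sub_cancel]
    rw [← hVj, hja]
  -- the characterization
  have hPQ : ∀ s : List A, s ++ [a] <+ T.take (n - 1) ↔ s <+ T.take (l - 1) := by
    intro s
    rw [hPd, key1 haV, hQd, key2]
  -- compute nu T
  have hdrop : T.dropLast = T.take (n - 1) := List.dropLast_eq_take (l := T)
  have hnuT : nu T = (SF (T.take (n - 1))).card - (SF (T.take (l - 1))).card := by
    rw [nu_eq, hdrop]
    rw [show SF T = SF (T.take (n - 1) ++ [a]) from by rw [← hT]]
    exact countAux _ _ a hPQ
  -- monotone f
  set f : ℕ → ℕ := fun i => (SF (T.take i)).card with hf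
  have hfmono : Monotone f := by
    intro i j hij
    apply Finset.card_le_card
    apply SF_mono
    have : T.take i = (T.take j).take i := by rw [List.take_take, min_eq_left hij]
    rw [this]
    exact (List.take_prefix _ _).sublist
  -- sum
  have hsum : ∀ i ∈ Finset.Icc l (n - 1), nu (T.take i) = f i - f (i - 1) := by
    intro i hi
    rw [Finset.mem_Icc] at hi
    rw [nu_eq]
    have hd : (T.take i).dropLast = T.take (i - 1) := by
      rw [List.dropLast_eq_take, List.length_take, List.take_take]
      congr 1
      omega
    rw [hd]
  rw [Finset.sum_congr rfl hsum, tele f hfmono l hl (n - 1) (by omega), hnuT]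
end

section
/- Let α ∈ (0,1), q = √(α(1−α)), and let ψ(n) = E[φ(S_n)] be the expected number of distinct nonempty subsequences of a random binary string with i.i.d. Bernoulli(α) letters. Then ψ(n) / (1+q)^n converges as n → ∞ to (1 + 2q)/(2q). -/
def subCard (a : Bool) (T : List Bool) : ℕ :=
  ((T.sublists.toFinset.erase []).filter (fun t => t.head? = some a)).card

lemma sublists_toFinset_cons (a : Bool) (T : List Bool) :
    (a :: T).sublists.toFinset =
      T.sublists.toFinset ∪ T.sublists.toFinset.image (a :: ·) := by
  ext t
  simp only [List.mem_toFinset, List.mem_sublists, Finset.mem_union, Finset.mem_image,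
    List.sublist_cons_iff]
  constructor
  · rintro (h | ⟨r, rfl, hr⟩)
    · exact Or.inl h
    · exact Or.inr ⟨r, hr, rfl⟩
  · rintro (h | ⟨r, hr, rfl⟩)
    · exact Or.inl h
    · exact Or.inr ⟨r, rfl, hr⟩

lemma phi_eq_subCard (T : List Bool) : phi T = subCard true T + subCard false T := by
  classical
  rw [phi, subCard, subCard]
  rw [← Finset.card_filter_add_card_filter_not (p := fun t => t.head? = some true)]
  congr 1
  rw [Finset.filter_congr (q := fun t => t.head? = some false)]
  intro t ht
  rcases t with _ | ⟨b, t⟩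
  · simp at ht
  · cases b <;> simp

lemma subCard_cons_same (a : Bool) (T : List Bool) :
    subCard a (a :: T) = phi T + 1 := by
  classical
  have himg : ((a :: T).sublists.toFinset.erase []).filter (fun t => t.head? = some a)
      = T.sublists.toFinset.image (a :: ·) := by
    ext t
    simp only [Finset.mem_filter, Finset.mem_erase, sublists_toFinset_cons,
      Finset.mem_union, Finset.mem_image, List.mem_toFinset, List.mem_sublists]
    constructor
    · rintro ⟨⟨hne, h | ⟨r, hr, rfl⟩⟩, hhd⟩
      · rcases t with _ | ⟨b, t⟩
        · simp at hne
        · simp only [List.head?_cons, Option.some.injEq] at hhd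
          subst hhd
          exact ⟨t, ((List.sublist_cons_self b t).trans h), rfl⟩
      · exact ⟨r, hr, rfl⟩
    · rintro ⟨r, hr, rfl⟩
      exact ⟨⟨by simp, Or.inr ⟨r, hr, rfl⟩⟩, rfl⟩
  rw [subCard, himg, Finset.card_image_of_injective _ (fun x y h => by simpa using h)]
  rw [phi]
  have : ([] : List Bool) ∈ T.sublists.toFinset := by simp
  rw [Finset.card_erase_of_mem this]
  have hpos : 0 < T.sublists.toFinset.card := Finset.card_pos.2 ⟨[], this⟩
  omega

lemma subCard_cons_ne (a b : Bool) (h : b ≠ a) (T : List Bool) :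
    subCard b (a :: T) = subCard b T := by
  classical
  rw [subCard, subCard]
  congr 1
  ext t
  simp only [Finset.mem_filter, Finset.mem_erase, sublists_toFinset_cons,
    Finset.mem_union, Finset.mem_image, List.mem_toFinset, List.mem_sublists]
  constructor
  · rintro ⟨⟨hne, h' | ⟨r, hr, rfl⟩⟩, hhd⟩
    · exact ⟨⟨hne, h'⟩, hhd⟩
    · simp only [List.head?_cons, Option.some.injEq] at hhd
      exact absurd hhd.symm h
  · rintro ⟨⟨hne, h'⟩, hhd⟩
    exact ⟨⟨hne, Or.inl h'⟩, hhd⟩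

def wt (α : ℝ) (l : List Bool) : ℝ := α ^ l.count true * (1 - α) ^ l.count false

noncomputable def Useq (α : ℝ) (a : Bool) (n : ℕ) : ℝ :=
  ∑ T : Fin n → Bool, (subCard a (List.ofFn T) : ℝ) * wt α (List.ofFn T)

noncomputable def Wseq (α : ℝ) (n : ℕ) : ℝ :=
  ∑ T : Fin n → Bool, wt α (List.ofFn T)

lemma wt_cons_true (α : ℝ) (l : List Bool) : wt α (true :: l) = α * wt α l := by
  simp [wt, List.count_cons, pow_succ]; ring

lemma wt_cons_false (α : ℝ) (l : List Bool) : wt α (false :: l) = (1 - α) * wt α l := by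
  simp [wt, List.count_cons, pow_succ]; ring

lemma sum_ofFn_succ (F : List Bool → ℝ) (n : ℕ) :
    ∑ T : Fin (n+1) → Bool, F (List.ofFn T)
      = (∑ T : Fin n → Bool, F (true :: List.ofFn T))
        + ∑ T : Fin n → Bool, F (false :: List.ofFn T) := by
  have hcons : ∀ (b : Bool) (T : Fin n → Bool),
      List.ofFn ((Fin.consEquiv (fun _ => Bool)) (b, T)) = b :: List.ofFn T := by
    intro b T
    simp [Fin.consEquiv, List.ofFn_succ]
  rw [← Equiv.sum_comp (Fin.consEquiv (fun _ => Bool)) (fun T => F (List.ofFn T))]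
  rw [Fintype.sum_prod_type, Fintype.sum_bool]
  congr 1
  · exact Finset.sum_congr rfl fun T _ => by rw [hcons]
  · exact Finset.sum_congr rfl fun T _ => by rw [hcons]

lemma Wseq_zero (α : ℝ) : Wseq α 0 = 1 := by
  simp [Wseq, wt]

lemma Wseq_one (α : ℝ) : ∀ n, Wseq α n = 1 := by
  intro n
  induction n with
  | zero => exact Wseq_zero α
  | succ n ih =>
    have : Wseq α (n+1) = α * Wseq α n + (1 - α) * Wseq α n := by
      rw [show Wseq α (n+1) = ∑ T : Fin (n+1) → Bool,
          (fun l => wt α l) (List.ofFn T) from rfl, sum_ofFn_succ]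
      simp only [wt_cons_true, wt_cons_false, Wseq, Finset.mul_sum]
    rw [this, ih]; ring

lemma Useq_zero (α : ℝ) (a : Bool) : Useq α a 0 = 0 := by
  simp [Useq, subCard]

lemma Useq_true_succ (α : ℝ) (n : ℕ) :
    Useq α true (n+1)
      = α * (Useq α true n + Useq α false n + Wseq α n) + (1 - α) * Useq α true n := by
  rw [show Useq α true (n+1) = ∑ T : Fin (n+1) → Bool,
      (fun l => (subCard true l : ℝ) * wt α l) (List.ofFn T) from rfl,
    sum_ofFn_succ (fun l => (subCard true l : ℝ) * wt α l) n]
  simp only [subCard_cons_same, subCard_cons_ne true true, wt_cons_true, wt_cons_false,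
    subCard_cons_ne false true (by decide), Useq, Wseq, Finset.mul_sum,
    ← Finset.sum_add_distrib]
  apply Finset.sum_congr rfl
  intro T _
  push_cast [phi_eq_subCard]
  ring

lemma Useq_false_succ (α : ℝ) (n : ℕ) :
    Useq α false (n+1)
      = (1 - α) * (Useq α true n + Useq α false n + Wseq α n) + α * Useq α false n := by
  rw [show Useq α false (n+1) = ∑ T : Fin (n+1) → Bool,
      (fun l => (subCard false l : ℝ) * wt α l) (List.ofFn T) from rfl,
    sum_ofFn_succ (fun l => (subCard false l : ℝ) * wt α l) n]
  simp only [subCard_cons_same, wt_cons_true, wt_cons_false,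
    subCard_cons_ne true false (by decide), Useq, Wseq, Finset.mul_sum,
    ← Finset.sum_add_distrib]
  apply Finset.sum_congr rfl
  intro T _
  push_cast [phi_eq_subCard]
  ring

theorem stmt_13 (α : ℝ) (hα : α ∈ Set.Ioo (0:ℝ) 1)
    (q : ℝ) (hq : q = Real.sqrt (α * (1 - α)))
    (ψ : ℕ → ℝ)
    (hψ : ∀ n, ψ n = ∑ T : Fin n → Bool,
        (phi (List.ofFn T) : ℝ) * α ^ ((List.ofFn T).count true)
          * (1 - α) ^ ((List.ofFn T).count false)) :
    Filter.Tendsto (fun n => ψ n / (1 + q) ^ n) Filter.atTop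
      (nhds ((1 + 2 * q) / (2 * q))) := by
  obtain ⟨hα0, hα1⟩ := hα
  have h1α : (0:ℝ) < 1 - α := by linarith
  have hqpos : 0 < q := by rw [hq]; positivity
  have hq2 : q ^ 2 = α * (1 - α) := by rw [hq]; exact Real.sq_sqrt (by positivity)
  have hqlt1 : q < 1 := by nlinarith [hq2, hqpos]
  have hψuv : ∀ n, ψ n = Useq α true n + Useq α false n := by
    intro n
    rw [hψ n]
    simp only [Useq, ← Finset.sum_add_distrib]
    apply Finset.sum_congr rfl
    intro T _
    push_cast [phi_eq_subCard]
    rw [wt]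
    ring
  have key : ∀ n, 2*q*Useq α true n = (α+q)*((1+q)^n - 1) + (α-q)*(1 - (1-q)^n)
      ∧ 2*α*Useq α false n = (α+q)*((1+q)^n - 1) - (α-q)*(1 - (1-q)^n) := by
    intro n
    induction n with
    | zero => simp [Useq_zero]
    | succ n ih =>
      obtain ⟨ih1, ih2⟩ := ih
      have hrecU := Useq_true_succ α n
      have hrecV := Useq_false_succ α n
      rw [Wseq_one] at hrecU hrecV
      constructor
      · linear_combination 2*q*hrecU + ih1 + q*ih2
      · linear_combination 2*α*hrecV + q*ih1 + ih2 - (2*Useq α true n + 2)*hq2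
  have hclosed : ∀ n, ψ n
      = ((1+2*q)*(1+q)^n + (2*q-1)*(1-q)^n - 4*q)/(2*q) := by
    intro n
    rw [eq_div_iff (by positivity : (2*q:ℝ) ≠ 0)]
    apply mul_left_cancel₀ (ne_of_gt hα0)
    obtain ⟨k1, k2⟩ := key n
    linear_combination 2*q*α*(hψuv n) + α*k1 + q*k2 + ((1+q)^n - (1-q)^n)*hq2
  have hr0 : (0:ℝ) ≤ (1-q)/(1+q) := div_nonneg (by linarith) (by linarith)
  have hr1 : (1-q)/(1+q) < 1 := (div_lt_one (by linarith)).2 (by linarith)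
  have hs0 : (0:ℝ) ≤ 1/(1+q) := by positivity
  have hs1 : 1/(1+q) < 1 := (div_lt_one (by linarith)).2 (by linarith)
  have hlim : Filter.Tendsto (fun n => (1+2*q)/(2*q) + (2*q-1)/(2*q)*((1-q)/(1+q))^n
      - 2*(1/(1+q))^n) Filter.atTop (nhds ((1+2*q)/(2*q))) := by
    have h1 := tendsto_pow_atTop_nhds_zero_of_lt_one hr0 hr1
    have h2 := tendsto_pow_atTop_nhds_zero_of_lt_one hs0 hs1
    have hcomb := ((tendsto_const_nhds (x := (1+2*q)/(2*q)) (f := Filter.atTop)).add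
      (h1.const_mul ((2*q-1)/(2*q)))).sub (h2.const_mul 2)
    simpa using hcomb
  refine Filter.Tendsto.congr (fun n => ?_) hlim
  rw [hclosed n]
  have hX : ((1+q):ℝ)^n ≠ 0 := pow_ne_zero _ (by linarith)
  have h1q : ((1:ℝ)+q) ≠ 0 := by linarith
  rw [div_pow, div_pow, one_pow]
  field_simp
  ring
end

section
/- Let s_1, s_2, ... be i.i.d. letters from {1,...,d} with Pr[s_i = j] = α_j and ψ(n) = E[φ(S_n)] the expected number of distinct nonempty subsequences of S_n = (s_1,...,s_n). Then there exists a constant c with 1 ≤ c ≤ d such that ψ(n)^{1/n} → c as n → ∞. -/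
lemma one_add_phi {A : Type*} [DecidableEq A] (L : List A) :
    1 + phi L = L.sublists.toFinset.card := by
  have h : ([] : List A) ∈ L.sublists.toFinset := by
    simp [List.mem_sublists]
  rw [phi, Finset.card_erase_of_mem h]
  have := Finset.card_pos.2 ⟨[], h⟩
  omega

lemma phi_append_le {A : Type*} [DecidableEq A] (L1 L2 : List A) :
    1 + phi (L1 ++ L2) ≤ (1 + phi L1) * (1 + phi L2) := by
  rw [one_add_phi, one_add_phi, one_add_phi]
  calc (L1 ++ L2).sublists.toFinset.card
      ≤ ((L1.sublists.toFinset ×ˢ L2.sublists.toFinset).image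
          (fun p : List A × List A => p.1 ++ p.2)).card := by
        apply Finset.card_le_card
        intro x hx
        rw [List.mem_toFinset, List.mem_sublists, List.sublist_append_iff] at hx
        obtain ⟨u, v, rfl, hu, hv⟩ := hx
        exact Finset.mem_image.2 ⟨(u, v), Finset.mem_product.2
          ⟨by simp [List.mem_sublists, hu], by simp [List.mem_sublists, hv]⟩, rfl⟩
    _ ≤ (L1.sublists.toFinset ×ˢ L2.sublists.toFinset).card := Finset.card_image_le
    _ = _ := Finset.card_product _ _

lemma one_le_phi {A : Type*} [DecidableEq A] {L : List A} (h : L ≠ []) : 1 ≤ phi L :=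
  Finset.card_pos.2 ⟨L, Finset.mem_erase.2 ⟨h, by simp [List.mem_sublists]⟩⟩

lemma phi_le_bound {d : ℕ} (hd : 0 < d) (L : List (Fin d)) :
    1 + phi L ≤ (L.length + 1) * d ^ L.length := by
  rw [one_add_phi]
  have key : L.sublists.toFinset.card ≤
      (Finset.range (L.length + 1) ×ˢ (Finset.univ : Finset (Fin L.length → Fin d))).card := by
    apply Finset.card_le_card_of_injOn
      (fun ℓ => (ℓ.length, fun i : Fin L.length => ℓ.getD i ⟨0, hd⟩))
    · intro ℓ hℓ
      rw [Finset.mem_coe, List.mem_toFinset, List.mem_sublists] at hℓ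
      have := hℓ.length_le
      simp only [Finset.mem_coe, Finset.mem_product, Finset.mem_range, Finset.mem_univ, and_true]
      omega
    · intro ℓ₁ h₁ ℓ₂ h₂ heq
      simp only [Finset.mem_coe, List.mem_toFinset, List.mem_sublists] at h₁ h₂
      have hlen : ℓ₁.length = ℓ₂.length := congrArg Prod.fst heq
      have hfun := congrArg Prod.snd heq
      apply List.ext_getElem hlen
      intro i hi1 hi2
      have hiL : i < L.length := lt_of_lt_of_le hi1 h₁.length_le
      have := congrFun hfun ⟨i, hiL⟩
      simpa [List.getD, List.getElem?_eq_getElem hi1, List.getElem?_eq_getElem hi2] using this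
  calc L.sublists.toFinset.card ≤ _ := key
    _ = (L.length + 1) * d ^ L.length := by
        rw [Finset.card_product, Finset.card_range, Finset.card_univ]
        simp [Fintype.card_fun]

open Filter Real

theorem stmt_16 (d : ℕ) (hd : 0 < d) (α : Fin d → ℝ)
    (hα : ∀ j, 0 ≤ α j) (hsum : ∑ j, α j = 1)
    (ψ : ℕ → ℝ)
    (hψ : ∀ n, ψ n = ∑ T : Fin n → Fin d,
        (phi (List.ofFn T) : ℝ) * ∏ i, α (T i)) :
    ∃ c : ℝ, 1 ≤ c ∧ c ≤ d ∧
      Filter.Tendsto (fun n : ℕ => ψ n ^ ((1 : ℝ) / n)) Filter.atTop (nhds c) := by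
  have hprodnn : ∀ {n : ℕ} (T : Fin n → Fin d), 0 ≤ ∏ i, α (T i) :=
    fun T => Finset.prod_nonneg fun i _ => hα _
  have hone : ∀ n : ℕ, ∑ T : Fin n → Fin d, ∏ i, α (T i) = 1 := by
    intro n
    rw [← Fintype.piFinset_univ, ← Finset.prod_univ_sum]
    simp [hsum]
  set F : ℕ → ℝ := fun n => 1 + ψ n with hFdef
  have hF : ∀ n, F n = ∑ T : Fin n → Fin d,
      ((1 + phi (List.ofFn T) : ℕ) : ℝ) * ∏ i, α (T i) := by
    intro n
    have : ∀ T : Fin n → Fin d, ((1 + phi (List.ofFn T) : ℕ) : ℝ) * ∏ i, α (T i)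
        = (∏ i, α (T i)) + (phi (List.ofFn T) : ℝ) * ∏ i, α (T i) := by
      intro T; push_cast; ring
    rw [Finset.sum_congr rfl (fun T _ => this T), Finset.sum_add_distrib, hone n, ← hψ n]
  have hψnn : ∀ n, 0 ≤ ψ n := by
    intro n
    rw [hψ n]
    exact Finset.sum_nonneg fun T _ => mul_nonneg (Nat.cast_nonneg _) (hprodnn T)
  have hψ1 : ∀ n : ℕ, 1 ≤ n → 1 ≤ ψ n := by
    intro n hn
    rw [hψ n]
    calc (1 : ℝ) = ∑ T : Fin n → Fin d, ∏ i, α (T i) := (hone n).symm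
      _ ≤ _ := by
        apply Finset.sum_le_sum
        intro T _
        have h1 : 1 ≤ phi (List.ofFn T) := one_le_phi (by simp; omega)
        exact le_mul_of_one_le_left (hprodnn T) (by exact_mod_cast h1)
  have hF1 : ∀ n, 1 ≤ F n := fun n => by
    simp only [hFdef]; linarith [hψnn n]
  have hFpos : ∀ n, (0:ℝ) < F n := fun n => lt_of_lt_of_le zero_lt_one (hF1 n)
  -- submultiplicativity
  have hFsub : ∀ m n, F (m + n) ≤ F m * F n := by
    intro m n
    rw [hF, hF, hF]
    have hsplit : ∑ T : Fin (m+n) → Fin d, ((1 + phi (List.ofFn T) : ℕ) : ℝ) * ∏ i, α (T i)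
        = ∑ p : (Fin m → Fin d) × (Fin n → Fin d),
            ((1 + phi (List.ofFn p.1 ++ List.ofFn p.2) : ℕ) : ℝ) *
              ((∏ i, α (p.1 i)) * (∏ i, α (p.2 i))) := by
      rw [← Equiv.sum_comp (Fin.appendEquiv m n)]
      apply Finset.sum_congr rfl
      intro p _
      have h1 : List.ofFn (Fin.append p.1 p.2) = List.ofFn p.1 ++ List.ofFn p.2 :=
        List.ofFn_fin_append p.1 p.2
      have h2 : ∏ i : Fin (m+n), α (Fin.append p.1 p.2 i)
          = (∏ i, α (p.1 i)) * ∏ i, α (p.2 i) := by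
        rw [Fin.prod_univ_add]
        simp [Fin.append_left, Fin.append_right]
      simp only [Fin.appendEquiv, Equiv.coe_fn_mk, h1, h2]
    rw [hsplit, Finset.sum_mul_sum, Fintype.sum_prod_type]
    apply Finset.sum_le_sum
    intro T1 _
    apply Finset.sum_le_sum
    intro T2 _
    have hc : ((1 + phi (List.ofFn T1 ++ List.ofFn T2) : ℕ) : ℝ)
        ≤ ((1 + phi (List.ofFn T1) : ℕ) : ℝ) * ((1 + phi (List.ofFn T2) : ℕ) : ℝ) := by
      exact_mod_cast phi_append_le (List.ofFn T1) (List.ofFn T2)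
    calc ((1 + phi (List.ofFn T1 ++ List.ofFn T2) : ℕ) : ℝ) *
          ((∏ i, α (T1 i)) * (∏ i, α (T2 i)))
        ≤ (((1 + phi (List.ofFn T1) : ℕ) : ℝ) * ((1 + phi (List.ofFn T2) : ℕ) : ℝ)) *
          ((∏ i, α (T1 i)) * (∏ i, α (T2 i))) :=
          mul_le_mul_of_nonneg_right hc (mul_nonneg (hprodnn T1) (hprodnn T2))
      _ = _ := by ring
  -- Fekete
  set a : ℕ → ℝ := fun n => Real.log (F n) with hadef
  have hsuba : Subadditive a := by
    intro m n
    simp only [hadef]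
    rw [← Real.log_mul (hFpos m).ne' (hFpos n).ne']
    exact Real.log_le_log (hFpos (m + n)) (hFsub m n)
  have hannn : ∀ n, 0 ≤ a n := fun n => Real.log_nonneg (hF1 n)
  have hbdd : BddBelow (Set.range fun n : ℕ => a n / n) := by
    refine ⟨0, ?_⟩
    rintro x ⟨n, rfl⟩
    exact div_nonneg (hannn n) (Nat.cast_nonneg n)
  have htend : Tendsto (fun n : ℕ => a n / n) atTop (nhds hsuba.lim) :=
    hsuba.tendsto_lim hbdd
  set L : ℝ := hsuba.lim with hLdef
  have hL0 : 0 ≤ L :=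
    ge_of_tendsto' htend fun n => div_nonneg (hannn n) (Nat.cast_nonneg n)
  -- upper bound F n ≤ (n+1) d^n
  have hFle : ∀ n : ℕ, F n ≤ ((n:ℝ) + 1) * (d:ℝ) ^ n := by
    intro n
    rw [hF n]
    calc ∑ T : Fin n → Fin d, ((1 + phi (List.ofFn T) : ℕ) : ℝ) * ∏ i, α (T i)
        ≤ ∑ T : Fin n → Fin d, (((n:ℝ) + 1) * (d:ℝ) ^ n) * ∏ i, α (T i) := by
          apply Finset.sum_le_sum
          intro T _
          apply mul_le_mul_of_nonneg_right _ (hprodnn T)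
          have := phi_le_bound hd (List.ofFn T)
          rw [List.length_ofFn] at this
          exact_mod_cast this
      _ = ((n:ℝ) + 1) * (d:ℝ) ^ n := by rw [← Finset.mul_sum, hone n, mul_one]
  have hd1 : (1:ℝ) ≤ (d:ℝ) := by exact_mod_cast hd
  have hadiv : ∀ n : ℕ, 1 ≤ n → a n / n ≤ Real.log ((n:ℝ) + 1) / n + Real.log d := by
    intro n hn
    have hn' : (0:ℝ) < n := by exact_mod_cast hn
    have h1 : a n ≤ Real.log ((n:ℝ) + 1) + n * Real.log d := by
      have hlog := Real.log_le_log (hFpos n) (hFle n)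
      rwa [Real.log_mul (by positivity) (by positivity), Real.log_pow] at hlog
    calc a n / n ≤ (Real.log ((n:ℝ) + 1) + n * Real.log d) / n :=
          (div_le_div_iff_of_pos_right hn').2 h1
      _ = Real.log ((n:ℝ) + 1) / n + Real.log d := by
          rw [add_div]
          congr 1
          exact mul_div_cancel_left₀ _ hn'.ne'
  -- log(n+1)/n → 0
  have hlog0 : Tendsto (fun n : ℕ => Real.log ((n:ℝ) + 1) / n) atTop (nhds 0) := by
    have hx : Tendsto (fun x : ℝ => Real.log x / x) atTop (nhds 0) :=
      Real.isLittleO_log_id_atTop.tendsto_div_nhds_zero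
    have hn1 : Tendsto (fun n : ℕ => (n:ℝ) + 1) atTop atTop :=
      tendsto_atTop_add_const_right _ 1 tendsto_natCast_atTop_atTop
    have h1 : Tendsto (fun n : ℕ => Real.log ((n:ℝ) + 1) / ((n:ℝ) + 1)) atTop (nhds 0) :=
      hx.comp hn1
    have h2 : Tendsto (fun n : ℕ => ((n:ℝ) + 1) / n) atTop (nhds 1) := by
      have : Tendsto (fun n : ℕ => 1 + 1 / (n:ℝ)) atTop (nhds (1 + 0)) :=
        tendsto_const_nhds.add tendsto_one_div_atTop_nhds_zero_nat
      rw [add_zero] at this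
      apply this.congr'
      filter_upwards [eventually_ne_atTop 0] with n hn
      have hn' : (n:ℝ) ≠ 0 := Nat.cast_ne_zero.2 hn
      field_simp
    have := h1.mul h2
    rw [zero_mul] at this
    apply this.congr
    intro n
    rw [div_mul_div_comm, mul_comm ((n:ℝ) + 1) (n:ℝ)]
    exact mul_div_mul_right _ _ (by positivity)
  have hLd : L ≤ Real.log d := by
    have hb : Tendsto (fun n : ℕ => Real.log ((n:ℝ) + 1) / n + Real.log d) atTop
        (nhds (Real.log d)) := by
      have := hlog0.add (tendsto_const_nhds (x := Real.log d) (f := atTop))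
      rwa [zero_add] at this
    exact le_of_tendsto_of_tendsto htend hb (eventually_atTop.2 ⟨1, hadiv⟩)
  refine ⟨Real.exp L, Real.one_le_exp hL0, ?_, ?_⟩
  · calc Real.exp L ≤ Real.exp (Real.log d) := Real.exp_le_exp.2 hLd
      _ = d := Real.exp_log (by positivity)
  -- final convergence
  have hψpos : ∀ n : ℕ, 1 ≤ n → (0:ℝ) < ψ n := fun n hn => zero_lt_one.trans_le (hψ1 n hn)
  have hup : ∀ᶠ n : ℕ in atTop, Real.log (ψ n) / n ≤ a n / n := by
    filter_upwards [eventually_ge_atTop 1] with n hn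
    apply div_le_div_of_nonneg_right _ (by positivity : (0:ℝ) ≤ (n:ℝ))
    exact Real.log_le_log (hψpos n hn) (by simp only [hFdef]; linarith)
  have hlow : ∀ᶠ n : ℕ in atTop, a n / n - Real.log 2 / n ≤ Real.log (ψ n) / n := by
    filter_upwards [eventually_ge_atTop 1] with n hn
    have hn' : (0:ℝ) < n := by exact_mod_cast hn
    have h1 : a n ≤ Real.log 2 + Real.log (ψ n) := by
      have : F n ≤ 2 * ψ n := by simp only [hFdef]; linarith [hψ1 n hn]
      calc a n ≤ Real.log (2 * ψ n) := Real.log_le_log (hFpos n) this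
        _ = Real.log 2 + Real.log (ψ n) :=
          Real.log_mul two_ne_zero (hψpos n hn).ne'
    rw [← sub_div]
    exact div_le_div_of_nonneg_right (by linarith) hn'.le
  have hlog2 : Tendsto (fun n : ℕ => a n / n - Real.log 2 / n) atTop (nhds L) := by
    have h2 : Tendsto (fun n : ℕ => Real.log 2 / n) atTop (nhds 0) :=
      tendsto_const_nhds.div_atTop tendsto_natCast_atTop_atTop
    have := htend.sub h2
    rwa [sub_zero] at this
  have h1 : Tendsto (fun n : ℕ => Real.log (ψ n) / n) atTop (nhds L) :=
    tendsto_of_tendsto_of_tendsto_of_le_of_le' hlog2 htend hlow hup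
  have h2 : Tendsto (fun n : ℕ => Real.exp (Real.log (ψ n) / n)) atTop
      (nhds (Real.exp L)) := (Real.continuous_exp.tendsto L).comp h1
  apply h2.congr'
  filter_upwards [eventually_ge_atTop 1] with n hn
  rw [Real.rpow_def_of_pos (hψpos n hn), mul_one_div]
end
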